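/- Let L be a Lie algebra over ℚ and K = (E ⊗_ℚ L)/N a completion with N entangled. Then for every n, K^{(n)} = (E ⊗_ℚ L^{(n)} + N)/N, i.e., the n-th derived subalgebra of K is the image of E ⊗_ℚ L^{(n)}. -/

import Mathlib

open scoped TensorProduct

/-- The quotient map `L → L ⧸ I` as a morphism of Lie algebras. -/
def LieIdealQuotientMk {R L : Type*} [CommRing R] [LieRing L] [LieAlgebra R L]
    (I : LieIdeal R L) : L →ₗ⁅R⁆ L ⧸ I :=
  { (I : Submodule R L).mkQ with map_lie' := rfl }

lemma LieIdealQuotientMk_surjective {R L : Type*} [CommRing R] [LieRing L] [LieAlgebra R L]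
    (I : LieIdeal R L) : Function.Surjective (LieIdealQuotientMk I) :=
  Submodule.Quotient.mk_surjective _

lemma range_baseChange_subtype {R A M : Type*} [CommRing R] [CommRing A] [Algebra R A]
    [AddCommGroup M] [Module R M] (p : Submodule R M) :
    LinearMap.range (p.subtype.baseChange A) = p.baseChange A := by
  apply le_antisymm
  · rintro _ ⟨x, rfl⟩
    induction x using TensorProduct.induction_on with
    | zero => simp
    | tmul a m => exact Submodule.tmul_mem_baseChange_of_mem a m.2
    | add x y hx hy => rw [map_add]; exact Submodule.add_mem _ hx hy
  · rw [Submodule.baseChange]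

lemma derivedSeries_baseChange (E L : Type) [Field E] [CharZero E] [LieRing L]
    [LieAlgebra ℚ L] (n : ℕ) :
    LieAlgebra.derivedSeries E (E ⊗[ℚ] L) n =
      LieSubmodule.baseChange E (LieAlgebra.derivedSeries ℚ L n) := by
  induction n with
  | zero =>
    simp only [LieAlgebra.derivedSeries_def, LieAlgebra.derivedSeriesOfIdeal_zero,
      LieSubmodule.baseChange_top]
  | succ n ih =>
    simp only [LieAlgebra.derivedSeries_def, LieAlgebra.derivedSeriesOfIdeal_succ] at ih ⊢
    rw [ih, ← LieSubmodule.lie_baseChange]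

/-- For a completion `K = (E ⊗_ℚ L) ⧸ N` of the rational Lie algebra `L` by an entangled
ideal `N`, the `n`-th derived subalgebra of `K` is the image of `E ⊗_ℚ L^{(n)}` in the
quotient, i.e. `K^{(n)} = (E ⊗_ℚ L^{(n)} + N) / N`. -/
theorem derivedSeries_of_completion
    (E L : Type) [Field E] [CharZero E] [LieRing L] [LieAlgebra ℚ L]
    (N : LieIdeal E (E ⊗[ℚ] L))
    (hN : ∀ a : L, (1 : E) ⊗ₜ[ℚ] a ∈ N → a = 0) (n : ℕ) :
    ((LieAlgebra.derivedSeries E ((E ⊗[ℚ] L) ⧸ N) n :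
        LieIdeal E ((E ⊗[ℚ] L) ⧸ N)) : Set ((E ⊗[ℚ] L) ⧸ N)) =
      (LieSubmodule.Quotient.mk (N := N)) ''
        (LinearMap.range (TensorProduct.map (LinearMap.id : E →ₗ[ℚ] E)
          ((LieAlgebra.derivedSeries ℚ L n : LieIdeal ℚ L) : Submodule ℚ L).subtype) :
            Set (E ⊗[ℚ] L)) := by
  set D : LieIdeal ℚ L := LieAlgebra.derivedSeries ℚ L n
  have h1 : LieAlgebra.derivedSeries E ((E ⊗[ℚ] L) ⧸ N) n =
      LieIdeal.map (LieIdealQuotientMk N) (LieAlgebra.derivedSeries E (E ⊗[ℚ] L) n) :=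
    (LieIdeal.derivedSeries_map_eq n (LieIdealQuotientMk_surjective N)).symm
  rw [h1, derivedSeries_baseChange]
  have h2 : ((LieIdeal.map (LieIdealQuotientMk N)
        (LieSubmodule.baseChange E D) : LieIdeal E ((E ⊗[ℚ] L) ⧸ N)) :
          Submodule E ((E ⊗[ℚ] L) ⧸ N)) =
      Submodule.map (LieIdealQuotientMk N).toLinearMap
        (LieSubmodule.baseChange E D : Submodule E (E ⊗[ℚ] L)) :=
    LieIdeal.coe_map_of_surjective (LieIdealQuotientMk_surjective N)
  have h3 : ((LieSubmodule.baseChange E D : LieSubmodule E (E ⊗[ℚ] L) (E ⊗[ℚ] L)) :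
      Set (E ⊗[ℚ] L)) =
      (LinearMap.range (TensorProduct.map (LinearMap.id : E →ₗ[ℚ] E)
        ((D : Submodule ℚ L).subtype)) : Set (E ⊗[ℚ] L)) := by
    have h3' : (LieSubmodule.baseChange E D : Submodule E (E ⊗[ℚ] L)) =
        LinearMap.range ((D : Submodule ℚ L).subtype.baseChange E) := by
      show LieSubmodule.toSubmodule (LieSubmodule.baseChange E D) =
        LinearMap.range ((LieSubmodule.toSubmodule D).subtype.baseChange E)
      rw [LieSubmodule.coe_baseChange, ← range_baseChange_subtype]
    rw [show ((LieSubmodule.baseChange E D : LieSubmodule E (E ⊗[ℚ] L) (E ⊗[ℚ] L)) :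
        Set (E ⊗[ℚ] L)) = ((LieSubmodule.baseChange E D : Submodule E (E ⊗[ℚ] L)) :
        Set (E ⊗[ℚ] L)) from rfl, h3']
    rfl
  calc ((LieIdeal.map (LieIdealQuotientMk N) (LieSubmodule.baseChange E D) :
        LieIdeal E ((E ⊗[ℚ] L) ⧸ N)) : Set ((E ⊗[ℚ] L) ⧸ N))
      = (Submodule.map (LieIdealQuotientMk N).toLinearMap
          (LieSubmodule.baseChange E D : Submodule E (E ⊗[ℚ] L)) :
            Set ((E ⊗[ℚ] L) ⧸ N)) := by rw [← h2]; rfl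
    _ = (LieIdealQuotientMk N) '' (LieSubmodule.baseChange E D : Set (E ⊗[ℚ] L)) :=
        Submodule.map_coe _ _
    _ = _ := by rw [h3]; rfl
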